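/- Let Q = [0,∞)_x × ℝ^p_y × ℝ_z, and let 𝒱_eb denote the C^∞(Q)-module of vector fields spanned by x∂_x, x∂_{y_1}, …, x∂_{y_p}, ∂_z. Let V = a·x∂_x + Σ_j b_j ∂_{y_j} + c·∂_z with a, b_j, c ∈ C^∞(Q). Then [V, W] ∈ 𝒱_eb for every W ∈ 𝒱_eb if and only if ∂_z b_j(0, y, z) = 0 for all j = 1,…,p and all (y,z), i.e. each restriction b_j|_{x=0} is independent of z. -/

import Mathlib

/-- Points of (a smooth extension across the boundary of) `Q = [0,∞)_x × ℝ^p_y × ℝ_z`. -/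
abbrev EbSpace (p : ℕ) : Type := ℝ × (Fin p → ℝ) × ℝ

/-- The commutator (Lie bracket) of two vector fields, written in coordinates. -/
noncomputable def vfBracket (p : ℕ) (X Y : EbSpace p → EbSpace p) : EbSpace p → EbSpace p :=
  fun q => fderiv ℝ Y q (X q) - fderiv ℝ X q (Y q)

/-- The `C^∞(Q)`-module `𝒱_eb` of edge-b-vector fields: those of the form
`A·(x∂_x) + Σ_j B_j·(x∂_{y_j}) + C·∂_z` with smooth coefficients. -/
def IsEbVF (p : ℕ) (W : EbSpace p → EbSpace p) : Prop :=
  ∃ (A : EbSpace p → ℝ) (B : EbSpace p → Fin p → ℝ) (C : EbSpace p → ℝ),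
    ContDiff ℝ (⊤ : ℕ∞) A ∧ ContDiff ℝ (⊤ : ℕ∞) B ∧ ContDiff ℝ (⊤ : ℕ∞) C ∧
    ∀ q, W q = (q.1 * A q, q.1 • B q, C q)


section Aux

open MeasureTheory intervalIntegral

variable {E F : Type} [NormedAddCommGroup E] [NormedSpace ℝ E]
  [NormedAddCommGroup F] [NormedSpace ℝ F] [CompleteSpace F]

noncomputable def prj (E : Type) [NormedAddCommGroup E] [NormedSpace ℝ E] :
    E →L[ℝ] E × ℝ := (ContinuousLinearMap.id ℝ E).prod 0

theorem key_hasFDerivAt [FiniteDimensional ℝ E] (h : E × ℝ → F)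
    (hh : ContDiff ℝ (⊤ : ℕ∞) h) (q₀ : E) :
    HasFDerivAt (fun q => ∫ t in (0:ℝ)..1, h (q, t))
      (∫ t in (0:ℝ)..1, (fderiv ℝ h (q₀, t)).comp (prj E)) q₀ := by
  have hcont : Continuous h := hh.continuous
  have hd : Differentiable ℝ h := hh.differentiable (by simp)
  have hfd : Continuous (fun p : E × ℝ => (fderiv ℝ h p).comp (prj E)) := by
    exact ((hh.fderiv_right (m := (⊤:ℕ∞)) (by simp)).clm_comp contDiff_const).continuous
  obtain ⟨C, hC⟩ : ∃ C, ∀ p ∈ (Metric.closedBall q₀ 1 ×ˢ Set.Icc (0:ℝ) 1),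
      ‖(fderiv ℝ h p).comp (prj E)‖ ≤ C :=
    ((isCompact_closedBall q₀ 1).prod isCompact_Icc).exists_bound_of_continuousOn
      hfd.continuousOn
  have hIoc : Set.uIoc (0:ℝ) 1 = Set.Ioc 0 1 := Set.uIoc_of_le zero_le_one
  have hdiff : ∀ (t : ℝ) (x : E), HasFDerivAt (fun x => h (x, t))
      ((fderiv ℝ h (x, t)).comp (prj E)) x := by
    intro t x
    exact (hd (x, t)).hasFDerivAt.comp x ((hasFDerivAt_id x).prodMk (hasFDerivAt_const t x))
  refine intervalIntegral.hasFDerivAt_integral_of_dominated_of_fderiv_le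
    (F := fun x t => h (x, t)) (F' := fun x t => (fderiv ℝ h (x, t)).comp (prj E))
    (bound := fun _ => C) (Metric.ball_mem_nhds q₀ one_pos) ?_ ?_ ?_ ?_ ?_ ?_
  · exact Filter.Eventually.of_forall fun x =>
      (hcont.comp (Continuous.prodMk_right x)).aestronglyMeasurable
  · exact (hcont.comp (Continuous.prodMk_right q₀)).intervalIntegrable 0 1
  · exact (hfd.comp (Continuous.prodMk_right q₀)).aestronglyMeasurable
  · refine Filter.Eventually.of_forall fun t ht x hx => hC _ ?_
    rw [hIoc] at ht
    exact ⟨Metric.ball_subset_closedBall hx, Set.Ioc_subset_Icc_self ht⟩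
  · exact intervalIntegrable_const
  · exact Filter.Eventually.of_forall fun t _ x _ => hdiff t x

theorem contDiff_param_integral [FiniteDimensional ℝ E] (n : ℕ) :
    ∀ {F : Type} [NormedAddCommGroup F] [NormedSpace ℝ F] [CompleteSpace F]
      (h : E × ℝ → F), ContDiff ℝ (⊤ : ℕ∞) h →
      ContDiff ℝ (n : ℕ∞) (fun q => ∫ t in (0:ℝ)..1, h (q, t)) := by
  induction n with
  | zero =>
    intro F _ _ _ h hh
    have : Continuous (fun q : E => ∫ t in (0:ℝ)..1, h (q, t)) :=
      continuous_iff_continuousAt.2 fun q =>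
        (key_hasFDerivAt h hh q).differentiableAt.continuousAt
    exact contDiff_zero.2 this
  | succ n ih =>
    intro F _ _ _ h hh
    have hder : (fderiv ℝ fun q => ∫ t in (0:ℝ)..1, h (q, t)) =
        fun q => ∫ t in (0:ℝ)..1, ((fderiv ℝ h (q, t)).comp (prj E)) :=
      funext fun q => (key_hasFDerivAt h hh q).fderiv
    have hsm : ContDiff ℝ (⊤ : ℕ∞) (fun p : E × ℝ => (fderiv ℝ h p).comp (prj E)) :=
      (hh.fderiv_right (m := (⊤:ℕ∞)) (by simp)).clm_comp contDiff_const
    have hcast : (((n + 1 : ℕ) : ℕ∞) : WithTop ℕ∞) = ((n : ℕ∞) : WithTop ℕ∞) + 1 := by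
      push_cast; rfl
    rw [hcast, contDiff_succ_iff_fderiv]
    refine ⟨fun q => (key_hasFDerivAt h hh q).differentiableAt, by simp, ?_⟩
    rw [hder]
    exact ih _ hsm

theorem contDiff_top_param_integral [FiniteDimensional ℝ E] (h : E × ℝ → F)
    (hh : ContDiff ℝ (⊤ : ℕ∞) h) :
    ContDiff ℝ (⊤ : ℕ∞) (fun q => ∫ t in (0:ℝ)..1, h (q, t)) :=
  contDiff_infty.2 fun n => contDiff_param_integral n h hh

theorem hadamard' {E F : Type} [NormedAddCommGroup E] [NormedSpace ℝ E]
    [FiniteDimensional ℝ E] [NormedAddCommGroup F] [NormedSpace ℝ F] [CompleteSpace F]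
    {f : ℝ × E → F} (hf : ContDiff ℝ (⊤ : ℕ∞) f) (h0 : ∀ e, f (0, e) = 0) :
    ∃ g : ℝ × E → F, ContDiff ℝ (⊤ : ℕ∞) g ∧ ∀ q, f q = q.1 • g q := by
  set D : (ℝ × E) × ℝ → F := fun p => fderiv ℝ f (p.2 * p.1.1, p.1.2) ((1:ℝ), (0:E)) with hD
  have hDsm : ContDiff ℝ (⊤ : ℕ∞) D := by
    have h1 : ContDiff ℝ (⊤ : ℕ∞) (fun p : (ℝ × E) × ℝ => (p.2 * p.1.1, p.1.2) : (ℝ × E) × ℝ → ℝ × E) :=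
      (contDiff_snd.mul (contDiff_fst.comp contDiff_fst)).prodMk (contDiff_snd.comp contDiff_fst)
    exact (((hf.fderiv_right (m := (⊤:ℕ∞)) (by simp)).comp h1).clm_apply contDiff_const)
  refine ⟨fun q => ∫ t in (0:ℝ)..1, D (q, t), contDiff_top_param_integral _ hDsm, ?_⟩
  rintro ⟨x, e⟩
  have hline : ∀ t : ℝ, HasDerivAt (fun t : ℝ => (t * x, e)) ((x, 0) : ℝ × E) t := by
    intro t
    simpa using ((hasDerivAt_id t).mul_const x).prodMk (hasDerivAt_const t e)
  have hder : ∀ t ∈ Set.uIcc (0:ℝ) 1, HasDerivAt (fun t => f (t * x, e))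
      (fderiv ℝ f (t * x, e) ((x : ℝ), (0 : E))) t := by
    intro t _
    exact ((hf.differentiable (by simp) (t * x, e)).hasFDerivAt).comp_hasDerivAt t (hline t)
  have hint : IntervalIntegrable (fun t => fderiv ℝ f (t * x, e) ((x:ℝ), (0:E))) MeasureTheory.volume 0 1 := by
    apply Continuous.intervalIntegrable
    have : Continuous (fun t : ℝ => fderiv ℝ f (t * x, e)) :=
      (hf.fderiv_right (m := (⊤:ℕ∞)) (by simp)).continuous.comp
        (((continuous_id.mul continuous_const).prodMk continuous_const))
    exact this.clm_apply continuous_const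
  have := intervalIntegral.integral_eq_sub_of_hasDerivAt hder hint
  simp only [one_mul, zero_mul, h0 e, sub_zero] at this
  rw [← this]
  rw [← intervalIntegral.integral_smul]
  congr 1
  funext t
  have : ((x : ℝ), (0 : E)) = x • ((1:ℝ), (0:E)) := by simp
  rw [this, ContinuousLinearMap.map_smul]

end Aux

/-- For `V = a·x∂_x + Σ_j b_j ∂_{y_j} + c·∂_z` with smooth coefficients,
one has `[V, W] ∈ 𝒱_eb` for all `W ∈ 𝒱_eb` if and only if `∂_z b_j(0,y,z) = 0` for all
`j, y, z`, i.e. each `b_j|_{x=0}` is independent of `z`. -/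
theorem commutator_b_vector_field_criterion
    (p : ℕ) (a c : EbSpace p → ℝ) (b : EbSpace p → Fin p → ℝ)
    (ha : ContDiff ℝ (⊤ : ℕ∞) a) (hb : ContDiff ℝ (⊤ : ℕ∞) b)
    (hc : ContDiff ℝ (⊤ : ℕ∞) c) :
    (∀ W, IsEbVF p W → IsEbVF p (vfBracket p (fun q => (q.1 * a q, b q, c q)) W))
    ↔ ∀ (y : Fin p → ℝ) (z : ℝ),
        fderiv ℝ b ((0 : ℝ), y, z) ((0 : ℝ), (0 : Fin p → ℝ), (1 : ℝ)) = 0 := by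
  have h1top : ((⊤ : ℕ∞) : WithTop ℕ∞) ≠ 0 := by simp
  set V : EbSpace p → EbSpace p := fun q => (q.1 * a q, b q, c q) with hV
  have hVsm : ContDiff ℝ (⊤ : ℕ∞) V := (contDiff_fst.mul ha).prodMk (hb.prodMk hc)
  constructor
  · intro h y z
    set W : EbSpace p → EbSpace p := fun _ => ((0:ℝ), (0 : Fin p → ℝ), (1:ℝ)) with hWdef
    obtain ⟨A, B, C, hA, hB, hC, hEq⟩ := h W
      ⟨fun _ => 0, fun _ => 0, fun _ => 1, contDiff_const, contDiff_const, contDiff_const,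
        fun q => by simp [hWdef]⟩
    set q₀ : EbSpace p := ((0:ℝ), y, z) with hq₀
    have hfd := hEq q₀
    -- fderiv of V at q₀
    have hV1 : HasFDerivAt (fun q : EbSpace p => q.1 * a q)
        (q₀.1 • fderiv ℝ a q₀ + a q₀ • ContinuousLinearMap.fst ℝ ℝ ((Fin p → ℝ) × ℝ)) q₀ :=
      hasFDerivAt_fst.mul (ha.differentiable h1top q₀).hasFDerivAt
    have hVd : HasFDerivAt V
        ((q₀.1 • fderiv ℝ a q₀ + a q₀ • ContinuousLinearMap.fst ℝ ℝ ((Fin p → ℝ) × ℝ)).prod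
          ((fderiv ℝ b q₀).prod (fderiv ℝ c q₀))) q₀ :=
      hV1.prodMk ((hb.differentiable h1top q₀).hasFDerivAt.prodMk
        (hc.differentiable h1top q₀).hasFDerivAt)
    have h2 := congrArg (fun v : EbSpace p => v.2.1) hfd
    simp only [vfBracket, hWdef, fderiv_const, hVd.fderiv] at h2
    simp only [hq₀] at h2
    simp [Prod.sub_def, ContinuousLinearMap.prod_apply] at h2
    simpa [neg_eq_zero] using h2
  · intro hcrit
    obtain ⟨ψ, hψsm, hψ⟩ := hadamard'
      (f := fun q : EbSpace p => fderiv ℝ b q ((0:ℝ), (0 : Fin p → ℝ), (1:ℝ)))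
      ((hb.fderiv_right (m := (⊤:ℕ∞)) (by simp)).clm_apply contDiff_const)
      (fun e => hcrit e.1 e.2)
    rintro W ⟨A, B, C, hA, hB, hC, hWeq⟩
    have hWfun : W = fun q => (q.1 * A q, q.1 • B q, C q) := funext hWeq
    subst hWfun
    refine ⟨fun q => fderiv ℝ A q (V q) - fderiv ℝ a q (q.1 * A q, q.1 • B q, C q),
      fun q => a q • B q + fderiv ℝ B q (V q) - fderiv ℝ b q (A q, B q, (0:ℝ)) - C q • ψ q,
      fun q => fderiv ℝ C q (V q) - fderiv ℝ c q (q.1 * A q, q.1 • B q, C q),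
      ?_, ?_, ?_, ?_⟩
    · exact ((hA.fderiv_right (m := (⊤:ℕ∞)) (by simp)).clm_apply hVsm).sub
        ((ha.fderiv_right (m := (⊤:ℕ∞)) (by simp)).clm_apply
          ((contDiff_fst.mul hA).prodMk ((contDiff_fst.smul hB).prodMk hC)))
    · exact (((ha.smul hB).add ((hB.fderiv_right (m := (⊤:ℕ∞)) (by simp)).clm_apply hVsm)).sub
        ((hb.fderiv_right (m := (⊤:ℕ∞)) (by simp)).clm_apply
          (hA.prodMk (hB.prodMk contDiff_const)))).sub (hC.smul hψsm)
    · exact ((hC.fderiv_right (m := (⊤:ℕ∞)) (by simp)).clm_apply hVsm).sub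
        ((hc.fderiv_right (m := (⊤:ℕ∞)) (by simp)).clm_apply
          ((contDiff_fst.mul hA).prodMk ((contDiff_fst.smul hB).prodMk hC)))
    · intro q
      have haq := (ha.differentiable h1top q).hasFDerivAt
      have hbq := (hb.differentiable h1top q).hasFDerivAt
      have hcq := (hc.differentiable h1top q).hasFDerivAt
      have hAq := (hA.differentiable h1top q).hasFDerivAt
      have hBq := (hB.differentiable h1top q).hasFDerivAt
      have hCq := (hC.differentiable h1top q).hasFDerivAt
      set fstL := ContinuousLinearMap.fst ℝ ℝ ((Fin p → ℝ) × ℝ) with hfstL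
      have hVd : HasFDerivAt V ((q.1 • fderiv ℝ a q + a q • fstL).prod
          ((fderiv ℝ b q).prod (fderiv ℝ c q))) q :=
        (hasFDerivAt_fst.mul haq).prodMk (hbq.prodMk hcq)
      have hWd : HasFDerivAt (fun q : EbSpace p => (q.1 * A q, q.1 • B q, C q))
          ((q.1 • fderiv ℝ A q + A q • fstL).prod
            ((q.1 • fderiv ℝ B q + fstL.smulRight (B q)).prod (fderiv ℝ C q))) q :=
        (hasFDerivAt_fst.mul hAq).prodMk ((hasFDerivAt_fst.smul hBq).prodMk hCq)
      have hsplit : ((q.1 * A q, q.1 • B q, C q) : EbSpace p) =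
          q.1 • ((A q, B q, (0:ℝ)) : EbSpace p) +
          C q • (((0:ℝ), (0 : Fin p → ℝ), (1:ℝ)) : EbSpace p) := by
        simp [Prod.ext_iff, smul_eq_mul]
      have hdb : fderiv ℝ b q ((q.1 * A q, q.1 • B q, C q) : EbSpace p) =
          q.1 • fderiv ℝ b q (A q, B q, (0:ℝ)) + C q • (q.1 • ψ q) := by
        rw [hsplit, map_add, map_smul, map_smul, hψ q]
      simp only [vfBracket, hVd.fderiv, hWd.fderiv]
      refine Prod.ext ?_ (Prod.ext ?_ ?_)
      · simp only [Prod.fst_sub, ContinuousLinearMap.prod_apply,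
          ContinuousLinearMap.add_apply, ContinuousLinearMap.smul_apply,
          ContinuousLinearMap.coe_fst', hfstL, smul_eq_mul, hV]
        ring
      · simp only [Prod.snd_sub, Prod.fst_sub, ContinuousLinearMap.prod_apply,
          ContinuousLinearMap.add_apply, ContinuousLinearMap.smul_apply,
          ContinuousLinearMap.smulRight_apply, ContinuousLinearMap.coe_fst', hfstL, hV]
        rw [hdb]
        module
      · simp only [Prod.snd_sub, ContinuousLinearMap.prod_apply, hV]
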